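/- arXiv:1808.03543 — 7 statements merged into one kernel-verified Lean document; each statement's English description precedes it below -/
import Mathlib

section
/- In any UP-algebra A, (x · (y · z)) · (x · ((a · y) · (a · z))) = 0 for all a, x, y, z ∈ A. -/
theorem stmt_6 {A : Type*} (m : A → A → A) (e : A)
    (up1 : ∀ x y z : A, m (m y z) (m (m x y) (m x z)) = e)
    (up2 : ∀ x : A, m e x = x)
    (up3 : ∀ x : A, m x e = e)
    (up4 : ∀ x y : A, m x y = e → m y x = e → x = y) :
    ∀ a x y z : A, m (m x (m y z)) (m x (m (m a y) (m a z))) = e := by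
  intro a x y z
  have h1 := up1 a y z
  have h2 := up1 x (m y z) (m (m a y) (m a z))
  rw [h1, up2] at h2
  exact h2
end

section
/- In any UP-algebra A, (((a · x) · (a · y)) · z) · ((x · y) · z) = 0 for all a, x, y, z ∈ A. -/
theorem stmt_7 {A : Type*} (m : A → A → A) (e : A)
    (up1 : ∀ x y z : A, m (m y z) (m (m x y) (m x z)) = e)
    (up2 : ∀ x : A, m e x = x)
    (up3 : ∀ x : A, m x e = e)
    (up4 : ∀ x y : A, m x y = e → m y x = e → x = y) :
    ∀ a x y z : A, m (m (m (m a x) (m a y)) z) (m (m x y) z) = e := by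
  intro a x y z
  have h1 : m (m x y) (m (m a x) (m a y)) = e := up1 a x y
  have h2 := up1 (m x y) (m (m a x) (m a y)) z
  rwa [h1, up2] at h2
end

section
/- In any UP-algebra A, ((x · y) · z) · (y · z) = 0 for all x, y, z ∈ A. -/
theorem stmt_8 {A : Type*} (m : A → A → A) (e : A)
    (up1 : ∀ x y z : A, m (m y z) (m (m x y) (m x z)) = e)
    (up2 : ∀ x : A, m e x = x)
    (up3 : ∀ x : A, m x e = e)
    (up4 : ∀ x y : A, m x y = e → m y x = e → x = y) :
    ∀ x y z : A, m (m (m x y) z) (m y z) = e := by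
  intro x y z
  have L1 : m y (m x y) = e := by
    have h := up1 x e y
    rwa [up3, up2, up2] at h
  have h := up1 y (m x y) z
  rwa [L1, up2] at h
end

section
/- In any UP-algebra A, ((x · y) · z) · (x · (y · z)) = 0 for all x, y, z ∈ A. -/
theorem stmt_10 {A : Type*} (m : A → A → A) (e : A)
    (up1 : ∀ x y z : A, m (m y z) (m (m x y) (m x z)) = e)
    (up2 : ∀ x : A, m e x = x)
    (up3 : ∀ x : A, m x e = e)
    (up4 : ∀ x y : A, m x y = e → m y x = e → x = y) :
    ∀ x y z : A, m (m (m x y) z) (m x (m y z)) = e := by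
  -- L1 : ∀ a b, m b (m a b) = e
  have L1 : ∀ a b : A, m b (m a b) = e := by
    intro a b
    have h := up1 a e b
    rwa [up2, up3, up2] at h
  intro x y z
  -- h1 : m ((x·y)·z) (y·z) = e
  have h1 : m (m (m x y) z) (m y z) = e := by
    have h := up1 y (m x y) z
    rwa [L1 x y, up2] at h
  -- h2 : m (y·z) (x·(y·z)) = e
  have h2 : m (m y z) (m x (m y z)) = e := L1 x (m y z)
  -- transitivity via up1
  have h := up1 (m (m x y) z) (m y z) (m x (m y z))
  rwa [h1, h2, up2, up2] at h
end

section
/- In any UP-algebra A, ((x · y) · z) · (y · (a · z)) = 0 for all a, x, y, z ∈ A. -/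
theorem stmt_11 {A : Type*} (m : A → A → A) (e : A)
    (up1 : ∀ x y z : A, m (m y z) (m (m x y) (m x z)) = e)
    (up2 : ∀ x : A, m e x = x)
    (up3 : ∀ x : A, m x e = e)
    (up4 : ∀ x y : A, m x y = e → m y x = e → x = y) :
    ∀ a x y z : A, m (m (m x y) z) (m y (m a z)) = e := by
  intro a x y z
  -- y ≤ x·y
  have h1 : m y (m x y) = e := by
    have := up1 x e y; rw [up2, up3, up2] at this; exact this
  -- z ≤ a·z
  have h2 : m z (m a z) = e := by
    have := up1 a e z; rw [up2, up3, up2] at this; exact this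
  -- (x·y)·z ≤ y·z  (antitone from h1)
  have h3 : m (m (m x y) z) (m y z) = e := by
    have := up1 y (m x y) z; rw [h1, up2] at this; exact this
  -- y·z ≤ y·(a·z)  (monotone from h2)
  have h4 : m (m y z) (m y (m a z)) = e := by
    have := up1 y z (m a z); rw [h2, up2] at this; exact this
  -- transitivity
  have := up1 (m (m x y) z) (m y z) (m y (m a z))
  rw [h4, up2, h3, up2] at this
  exact this
end

section
/- Let A = (A, ·, ∗, 0) where (A, ·, 0) is a UP-algebra and ∗ is a binary operation on A. If · is right distributive over ∗, i.e., (x ∗ y) · z = (x · z) ∗ (y · z) for all x, y, z, then x ∗ x = x for all x ∈ A. -/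
theorem stmt_18 {A : Type*} (m : A → A → A) (e : A)
    (up1 : ∀ x y z : A, m (m y z) (m (m x y) (m x z)) = e)
    (up2 : ∀ x : A, m e x = x)
    (up3 : ∀ x : A, m x e = e)
    (up4 : ∀ x y : A, m x y = e → m y x = e → x = y)
    (s : A → A → A)
    (rd : ∀ x y z : A, m (s x y) z = s (m x z) (m y z)) :
    ∀ x : A, s x x = x := by
  have hee : s e e = e := by
    have h := rd e e e
    rw [up3, up3] at h
    exact h.symm
  intro x
  have h := rd e e x
  rw [hee, up2] at h
  exact h.symm
end

section
/- Let A = (A, ·, ∗, 0) where (A, ·, 0) is a UP-algebra and (A, ∗) is a semigroup. If · is right distributive over ∗ and ∗ is distributive on both sides over · (i.e., (x ∗ y) · z = (x · z) ∗ (y · z), x ∗ (y · z) = (x ∗ y) · (x ∗ z), and (x · y) ∗ z = (x ∗ z) · (y ∗ z) for all x, y, z), then A = {0}, i.e., every element equals 0. -/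
theorem stmt_19 {A : Type*} (m : A → A → A) (e : A)
    (up1 : ∀ x y z : A, m (m y z) (m (m x y) (m x z)) = e)
    (up2 : ∀ x : A, m e x = x)
    (up3 : ∀ x : A, m x e = e)
    (up4 : ∀ x y : A, m x y = e → m y x = e → x = y)
    (s : A → A → A) (assoc : ∀ x y z : A, s (s x y) z = s x (s y z))
    (rd : ∀ x y z : A, m (s x y) z = s (m x z) (m y z))
    (sld : ∀ x y z : A, s x (m y z) = m (s x y) (s x z))
    (srd : ∀ x y z : A, s (m x y) z = m (s x z) (s y z)) :
    ∀ x : A, x = e := by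
  have hzz : ∀ z : A, m z z = e := by
    intro z
    have h := up1 e e z
    simpa [up2, up3] using h
  have hse : ∀ x : A, s x e = e := by
    intro x
    have h := sld x e e
    simpa [hzz] using h
  have hes : ∀ z : A, s e z = e := by
    intro z
    have h := srd e e z
    simpa [hzz] using h
  intro x
  have h := rd e x x
  simpa [hes, hse, hzz, up2] using h
end
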